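/- Let G be a compact abelian group with normalized Haar measure η, and Γ a group of continuous automorphisms of G. If the Haar measure η is ergodic with respect to the Γ-action, then every nontrivial character ϑ in the Pontryagin dual G° has an infinite Γ-orbit (under the contragradient action γ·ϑ = ϑ ∘ γ⁻¹). -/

import Mathlib

open MeasureTheory

/-- Auxiliary: a continuous invariant real function taking two distinct values
contradicts ergodicity. -/
lemma stmt_8_aux (G : Type*) [CommGroup G] [TopologicalSpace G]
    [IsTopologicalGroup G] [CompactSpace G] [MeasurableSpace G] [BorelSpace G]
    (η : Measure G) [η.IsHaarMeasure] [IsProbabilityMeasure η]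
    (Γ : Type*) [Group Γ] [MulDistribMulAction Γ G]
    (herg : ∀ B : Set G, MeasurableSet B →
      (∀ γ : Γ, (fun g : G => γ • g) ⁻¹' B = B) → η B = 0 ∨ η B = 1)
    (h : G → ℝ) (hc : Continuous h) (hinv : ∀ (γ : Γ) (g : G), h (γ • g) = h g)
    (a b : G) (hab : h a < h b) : False := by
  have hopos : η.IsOpenPosMeasure :=
    isOpenPosMeasure_of_mulLeftInvariant_of_compact (μ := η) Set.univ isCompact_univ
      (by simp)
  set c : ℝ := (h a + h b) / 2 with hc_def
  set B : Set G := {g | h g < c} with hB_def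
  have hBopen : IsOpen B := isOpen_lt hc continuous_const
  have hBmeas : MeasurableSet B := hBopen.measurableSet
  have hBinv : ∀ γ : Γ, (fun g : G => γ • g) ⁻¹' B = B := by
    intro γ; ext g; simp [hB_def, hinv γ g]
  have haB : a ∈ B := by simp only [hB_def, Set.mem_setOf_eq, hc_def]; linarith
  have hCopen : IsOpen {g : G | c < h g} := isOpen_lt continuous_const hc
  have hbC : b ∈ {g : G | c < h g} := by simp only [Set.mem_setOf_eq, hc_def]; linarith
  rcases herg B hBmeas hBinv with h0 | h1
  · exact absurd h0 (hBopen.measure_ne_zero η ⟨a, haB⟩)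
  · have hcomp : η Bᶜ = 0 := by
      have := measure_compl hBmeas (measure_ne_top η B)
      rw [h1] at this; simpa using this
    have hpos : η {g : G | c < h g} ≠ 0 := hCopen.measure_ne_zero η ⟨b, hbC⟩
    apply hpos
    refine le_antisymm ?_ (zero_le)
    rw [← hcomp]
    apply measure_mono
    intro g hg
    simp only [Set.mem_setOf_eq] at hg
    simp only [hB_def, Set.mem_compl_iff, Set.mem_setOf_eq, not_lt]
    linarith

/-- if the Haar measure of a compact abelian group `G` is ergodic
for the action of a group `Γ` of continuous automorphisms, then every
nontrivial (continuous, unit-circle-valued) character of `G` has an infinite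
orbit under the contragradient action `γ·ϑ = ϑ ∘ γ⁻¹`. -/
theorem stmt_8 (G : Type*) [CommGroup G] [TopologicalSpace G]
    [IsTopologicalGroup G] [CompactSpace G] [MeasurableSpace G] [BorelSpace G]
    (η : Measure G) [η.IsHaarMeasure] [IsProbabilityMeasure η]
    (Γ : Type*) [Group Γ] [MulDistribMulAction Γ G]
    (hcont : ∀ γ : Γ, Continuous (fun g : G => γ • g))
    (herg : ∀ B : Set G, MeasurableSet B →
      (∀ γ : Γ, (fun g : G => γ • g) ⁻¹' B = B) → η B = 0 ∨ η B = 1)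
    (ϑ : G →* ℂ) (hϑ : Continuous ϑ) (hnorm : ∀ g : G, ‖ϑ g‖ = 1)
    (hnt : ∃ g : G, ϑ g ≠ 1) :
    (Set.range (fun γ : Γ => fun g : G => ϑ (γ⁻¹ • g))).Infinite := by
  classical
  by_contra hfin
  rw [Set.not_infinite] at hfin
  -- the orbit as a set of monoid homs
  set χ : Γ → (G →* ℂ) := fun γ =>
    ϑ.comp (MulDistribMulAction.toMonoidHom G γ⁻¹) with hχ_def
  have hχ_apply : ∀ (γ : Γ) (g : G), χ γ g = ϑ (γ⁻¹ • g) := fun γ g => rfl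
  have hTfin : (Set.range χ).Finite := by
    have himg : (fun ψ : G →* ℂ => (ψ : G → ℂ)) '' Set.range χ
        = Set.range (fun γ : Γ => fun g : G => ϑ (γ⁻¹ • g)) := by
      ext f
      constructor
      · rintro ⟨ψ, ⟨γ, rfl⟩, rfl⟩; exact ⟨γ, rfl⟩
      · rintro ⟨γ, rfl⟩; exact ⟨χ γ, ⟨γ, rfl⟩, rfl⟩
    have : ((fun ψ : G →* ℂ => (ψ : G → ℂ)) '' Set.range χ).Finite := by
      rw [himg]; exact hfin
    exact Set.Finite.of_finite_image this
      (Set.injOn_of_injective (DFunLike.coe_injective))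
  set F : Finset (G →* ℂ) := hTfin.toFinset with hF_def
  have hmemF : ∀ ψ : G →* ℂ, ψ ∈ F ↔ ∃ γ : Γ, χ γ = ψ := by
    intro ψ; rw [hF_def, Set.Finite.mem_toFinset]; rfl
  have hϑF : ϑ ∈ F := by
    rw [hmemF]
    exact ⟨1, by ext g; simp [hχ_apply]⟩
  -- closure under composition with the action
  have hclosed : ∀ (δ : Γ) (ψ : G →* ℂ), ψ ∈ F →
      ψ.comp (MulDistribMulAction.toMonoidHom G δ) ∈ F := by
    intro δ ψ hψ
    rw [hmemF] at hψ ⊢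
    obtain ⟨γ, rfl⟩ := hψ
    refine ⟨δ⁻¹ * γ, ?_⟩
    ext g
    simp only [hχ_apply, MonoidHom.comp_apply, MulDistribMulAction.toMonoidHom_apply,
      hχ_def]
    rw [mul_inv_rev, inv_inv, mul_smul]
  -- the invariant function
  set f : G → ℂ := fun g => ∑ ψ ∈ F, ψ g with hf_def
  have hfcont : Continuous f := by
    apply continuous_finset_sum
    intro ψ hψ
    rw [hmemF] at hψ
    obtain ⟨γ, rfl⟩ := hψ
    exact hϑ.comp (hcont γ⁻¹)
  have hfinv : ∀ (δ : Γ) (g : G), f (δ • g) = f g := by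
    intro δ g
    rw [hf_def]
    refine Finset.sum_nbij' (fun ψ => ψ.comp (MulDistribMulAction.toMonoidHom G δ))
      (fun ψ => ψ.comp (MulDistribMulAction.toMonoidHom G δ⁻¹))
      (fun ψ hψ => hclosed δ ψ hψ) (fun ψ hψ => hclosed δ⁻¹ ψ hψ) ?_ ?_ ?_
    · intro ψ _; ext g'; simp
    · intro ψ _; ext g'; simp
    · intro ψ _; rfl
  -- f is not constant
  have hnonconst : ∃ a b : G, f a ≠ f b := by
    by_contra hcst
    push_neg at hcst
    have hli := linearIndependent_monoidHom G ℂ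
    rw [linearIndependent_iff'] at hli
    have h1F : (1 : G →* ℂ) ∉ F := by
      rw [hmemF]
      rintro ⟨γ, hγ⟩
      obtain ⟨g, hg⟩ := hnt
      apply hg
      have := DFunLike.congr_fun hγ (γ⁻¹⁻¹ • g)
      simpa [hχ_apply, inv_smul_smul] using this
    have hϑne1 : ϑ ≠ (1 : G →* ℂ) := by
      obtain ⟨g, hg⟩ := hnt
      intro h; apply hg; rw [h]; rfl
    -- coefficients
    set co : (G →* ℂ) → ℂ := fun ψ => if ψ = 1 then -(F.card : ℂ) else 1 with hco
    have hrel : ∑ ψ ∈ insert (1 : G →* ℂ) F, co ψ • (ψ : G → ℂ) = 0 := by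
      rw [Finset.sum_insert h1F]
      funext g
      have hsum : (∑ ψ ∈ F, co ψ • (ψ : G → ℂ)) g = f g := by
        simp only [Finset.sum_apply, Pi.smul_apply, hf_def]
        refine Finset.sum_congr rfl fun ψ hψ => ?_
        have : ψ ≠ 1 := fun h => h1F (h ▸ hψ)
        simp [hco, this]
      have hfg : f g = (F.card : ℂ) := by
        rw [hcst g 1]
        simp [hf_def]
      rw [Pi.add_apply, hsum, hfg]
      simp only [Pi.smul_apply, Pi.zero_apply, hco]
      simp
    have := hli (insert (1 : G →* ℂ) F) co hrel ϑ (Finset.mem_insert_of_mem hϑF)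
    rw [hco] at this
    simp [hϑne1] at this
  obtain ⟨a, b, hab⟩ := hnonconst
  have : (f a).re ≠ (f b).re ∨ (f a).im ≠ (f b).im := by
    by_contra hre
    push_neg at hre
    exact hab (Complex.ext hre.1 hre.2)
  rcases this with hre | him
  · rcases hre.lt_or_gt with hlt | hlt
    · exact stmt_8_aux G η Γ herg (fun g => (f g).re)
        (Complex.continuous_re.comp hfcont) (fun γ g => congrArg Complex.re (hfinv γ g)) a b hlt
    · exact stmt_8_aux G η Γ herg (fun g => (f g).re)
        (Complex.continuous_re.comp hfcont) (fun γ g => congrArg Complex.re (hfinv γ g)) b a hlt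
  · rcases him.lt_or_gt with hlt | hlt
    · exact stmt_8_aux G η Γ herg (fun g => (f g).im)
        (Complex.continuous_im.comp hfcont) (fun γ g => congrArg Complex.im (hfinv γ g)) a b hlt
    · exact stmt_8_aux G η Γ herg (fun g => (f g).im)
        (Complex.continuous_im.comp hfcont) (fun γ g => congrArg Complex.im (hfinv γ g)) b a hlt
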